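/- Let ({σ, σ'}, e) be an almost-d-simplex (d ≥ 2) in a simple directed graph. Then the directed graph G = (V, E) with V = Ver(σ) ∪ Ver(σ') and E = Edg(σ) ∪ Edg(σ') ∪ {e} contains exactly one d-simplex. -/
import Mathlib

/-- A `d`-simplex of a simple directed graph with edge relation `E`, given as a tuple
of `m = d+1` pairwise distinct vertices with an edge from earlier to later vertices. -/
def IsSimplex {V : Type*} (E : V → V → Prop) {m : ℕ} (σ : Fin m → V) : Prop :=
  Function.Injective σ ∧ ∀ i j : Fin m, i < j → E (σ i) (σ j)

/-- The set of (directed) edges of a tuple `σ`: `Edg(σ) = {(σ i, σ j) | i < j}`. -/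
def EdgSet {V : Type*} {m : ℕ} (σ : Fin m → V) : Set (V × V) :=
  {p | ∃ i j : Fin m, i < j ∧ p = (σ i, σ j)}

/-- An almost-`d`-simplex (`d = m+1`): a pair of `(d-1)`-simplices `σ, σ'` (tuples of
length `d = m+1`) sharing a common boundary `∂_i σ = ∂_{i'} σ'`, differing in the one
vertex (`σ i ≠ σ' i'`), together with the missing pair `e`, which is `(σ i, σ' i')`
(only allowed if `i ≤ i'`) or `(σ' i', σ i)` (only allowed if `i' ≤ i`). -/
def IsAlmostSimplex {V : Type*} (E : V → V → Prop) {m : ℕ}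
    (σ σ' : Fin (m + 1) → V) (e : V × V) : Prop :=
  IsSimplex E σ ∧ IsSimplex E σ' ∧
  ∃ i i' : Fin (m + 1),
    σ ∘ i.succAbove = σ' ∘ i'.succAbove ∧
    σ i ≠ σ' i' ∧
    ((i ≤ i' ∧ e = (σ i, σ' i')) ∨ (i' ≤ i ∧ e = (σ' i', σ i)))

private lemma succAbove_val' {m : ℕ} (i : Fin (m+1)) (j : Fin m) :
    (i.succAbove j : ℕ) = if (j:ℕ) < (i:ℕ) then (j:ℕ) else (j:ℕ)+1 := by
  rw [Fin.succAbove]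
  split_ifs with h1 h2 h2 <;>
    simp_all [Fin.lt_def, Fin.coe_castSucc, Fin.val_succ]

private lemma strictMono_fin_eq_id {m : ℕ} (g : Fin m → Fin m) (hg : StrictMono g) :
    g = id := by
  have hsurj : Function.Surjective g := Finite.injective_iff_surjective.mp hg.injective
  have := @StrictMono.range_inj (Fin m) (Fin m) inferInstance inferInstance
    (inferInstance : WellFoundedLT (Fin m)) g id hg strictMono_id
  exact this.1 (by rw [Set.range_eq_univ.mpr hsurj, Set.range_id])

private lemma key_lemma {V : Type*} {n : ℕ} {σ σ' : Fin (n + 2) → V}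
    (hσ : Function.Injective σ) (hσ' : Function.Injective σ')
    (i i' : Fin (n + 2)) (hii : (i:ℕ) ≤ (i':ℕ))
    (hc : σ ∘ i.succAbove = σ' ∘ i'.succAbove)
    (hne : σ i ≠ σ' i') :
    ∃! τ : Fin (n + 3) → V,
      IsSimplex (fun a b => (a, b) ∈ EdgSet σ ∪ EdgSet σ' ∪ {(σ i, σ' i')}) τ := by
  set E' : V → V → Prop :=
    fun a b => (a, b) ∈ EdgSet σ ∪ EdgSet σ' ∪ {(σ i, σ' i')} with hE'
  have hcc : ∀ m : Fin (n+1), σ (i.succAbove m) = σ' (i'.succAbove m) :=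
    fun m => congrFun hc m
  -- common vertices
  have F2 : ∀ j k, σ j = σ' k → ∃ m, j = i.succAbove m ∧ k = i'.succAbove m := by
    intro j k hjk
    have hji : j ≠ i := by
      rintro rfl
      have hki : k ≠ i' := by rintro rfl; exact hne hjk
      obtain ⟨m, rfl⟩ := Fin.exists_succAbove_eq hki
      have h2 : σ j = σ (j.succAbove m) := by rw [hjk, hcc]
      exact Fin.succAbove_ne j m (hσ h2).symm
    obtain ⟨m, rfl⟩ := Fin.exists_succAbove_eq hji
    refine ⟨m, rfl, hσ' ?_⟩
    rw [← hjk, hcc]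
  set pos : Fin (n+3) := i'.succ with hpos
  have hposval : (pos : ℕ) = (i' : ℕ) + 1 := rfl
  set τ₀ : Fin (n+3) → V := Fin.insertNth pos (σ' i') σ with hτ₀
  have hb : ∀ j : Fin (n+2), τ₀ (pos.succAbove j) = σ j :=
    fun j => Fin.insertNth_apply_succAbove pos _ _ j
  have hbp : τ₀ pos = σ' i' := Fin.insertNth_apply_same pos _ _
  -- everything related by E' lies in the range of τ₀, in order
  have hmem : ∀ x y, E' x y → ∃ p q : Fin (n+3), p < q ∧ x = τ₀ p ∧ y = τ₀ q := by
    intro x y hxy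
    rcases hxy with (h | h) | h
    · obtain ⟨j, k, hjk, hx⟩ := h
      rw [Prod.ext_iff] at hx
      refine ⟨pos.succAbove j, pos.succAbove k, ?_, ?_, ?_⟩
      · exact Fin.succAbove_lt_succAbove_iff.mpr hjk
      · rw [hb]; exact hx.1
      · rw [hb]; exact hx.2
    · obtain ⟨j, k, hjk, hx⟩ := h
      rw [Prod.ext_iff] at hx
      rcases eq_or_ne j i' with rfl | hj
      · -- x = σ' i', y = σ' k with i' < k
        have hk : k ≠ j := (ne_of_gt hjk)
        obtain ⟨m, rfl⟩ := Fin.exists_succAbove_eq hk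
        refine ⟨pos, pos.succAbove (i.succAbove m), ?_, by rw [hbp]; exact hx.1, ?_⟩
        · rw [Fin.lt_def, hposval, succAbove_val' pos (i.succAbove m),
            succAbove_val' i m]
          have h1 := Fin.lt_def.mp hjk
          rw [succAbove_val' j m] at h1
          split_ifs at h1 ⊢ <;> omega
        · rw [hb, hcc]; exact hx.2
      · obtain ⟨m, rfl⟩ := Fin.exists_succAbove_eq hj
        rcases eq_or_ne k i' with rfl | hk
        · -- y = σ' i', x = σ' (i'.succAbove m) with succAbove m < i'
          refine ⟨pos.succAbove (i.succAbove m), pos, ?_, ?_, by rw [hbp]; exact hx.2⟩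
          · rw [Fin.lt_def, hposval, succAbove_val' pos (i.succAbove m),
              succAbove_val' i m]
            have h1 := Fin.lt_def.mp hjk
            rw [succAbove_val' k m] at h1
            split_ifs at h1 ⊢ <;> omega
          · rw [hb, hcc]; exact hx.1
        · obtain ⟨m', rfl⟩ := Fin.exists_succAbove_eq hk
          have hmm : m < m' := Fin.succAbove_lt_succAbove_iff.mp hjk
          refine ⟨pos.succAbove (i.succAbove m), pos.succAbove (i.succAbove m'), ?_, ?_, ?_⟩
          · exact Fin.succAbove_lt_succAbove_iff.mpr
              (Fin.succAbove_lt_succAbove_iff.mpr hmm)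
          · rw [hb, hcc]; exact hx.1
          · rw [hb, hcc]; exact hx.2
    · -- the added edge
      rw [Set.mem_singleton_iff, Prod.ext_iff] at h
      refine ⟨pos.succAbove i, pos, ?_, by rw [hb]; exact h.1, by rw [hbp]; exact h.2⟩
      rw [Fin.lt_def, hposval, succAbove_val' pos i]
      split_ifs <;> omega
  -- injectivity of τ₀
  have hτ₀inj : Function.Injective τ₀ := by
    have hbr : ∀ k, σ k ≠ σ' i' := by
      intro k hk
      obtain ⟨m, _, hm2⟩ := F2 k i' hk
      exact Fin.succAbove_ne i' m hm2.symm
    intro p q hpq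
    rcases eq_or_ne p pos with rfl | hp
    · rcases eq_or_ne q pos with rfl | hq
      · rfl
      · obtain ⟨k, rfl⟩ := Fin.exists_succAbove_eq hq
        rw [hbp, hb] at hpq
        exact absurd hpq.symm (hbr k)
    · obtain ⟨j, rfl⟩ := Fin.exists_succAbove_eq hp
      rcases eq_or_ne q pos with rfl | hq
      · rw [hbp, hb] at hpq
        exact absurd hpq (hbr j)
      · obtain ⟨k, rfl⟩ := Fin.exists_succAbove_eq hq
        rw [hb, hb] at hpq
        rw [hσ hpq]
  -- τ₀ is a simplex
  have hsim : IsSimplex E' τ₀ := by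
    refine ⟨hτ₀inj, ?_⟩
    intro p q hpq
    rcases eq_or_ne p pos with rfl | hp
    · rcases eq_or_ne q pos with rfl | hq
      · exact absurd hpq (lt_irrefl _)
      · obtain ⟨k, rfl⟩ := Fin.exists_succAbove_eq hq
        -- σ' i' before σ k : need (k:ℕ) > i'
        have hkval : (i':ℕ) < (k:ℕ) := by
          have := Fin.lt_def.mp hpq
          rw [hposval, succAbove_val' pos k] at this
          split_ifs at this <;> omega
        have hki : k ≠ i := by
          intro hk; rw [hk] at hkval; omega
        obtain ⟨m, rfl⟩ := Fin.exists_succAbove_eq hki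
        rw [hbp, hb, hcc]
        refine Or.inl (Or.inr ⟨i', i'.succAbove m, ?_, rfl⟩)
        rw [Fin.lt_def, succAbove_val' i' m]
        rw [succAbove_val' i m] at hkval
        split_ifs at hkval ⊢ <;> omega
    · obtain ⟨j, rfl⟩ := Fin.exists_succAbove_eq hp
      rcases eq_or_ne q pos with rfl | hq
      · -- σ j before σ' i'
        have hjval : (j:ℕ) ≤ (i':ℕ) := by
          have := Fin.lt_def.mp hpq
          rw [hposval, succAbove_val' pos j] at this
          split_ifs at this <;> omega
        rw [hbp, hb]
        rcases eq_or_ne j i with rfl | hj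
        · exact Or.inr rfl
        · obtain ⟨m, rfl⟩ := Fin.exists_succAbove_eq hj
          rw [hcc]
          refine Or.inl (Or.inr ⟨i'.succAbove m, i', ?_, rfl⟩)
          rw [Fin.lt_def, succAbove_val' i' m]
          rw [succAbove_val' i m] at hjval
          split_ifs at hjval ⊢ <;> omega
      · obtain ⟨k, rfl⟩ := Fin.exists_succAbove_eq hq
        rw [hb, hb]
        exact Or.inl (Or.inl ⟨j, k, Fin.succAbove_lt_succAbove_iff.mp hpq, rfl⟩)
  refine ⟨τ₀, hsim, ?_⟩
  -- uniqueness
  intro τ hτ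
  obtain ⟨hτinj, hτedge⟩ := hτ
  have horder : ∀ p q : Fin (n+3), E' (τ₀ p) (τ₀ q) → p < q := by
    intro p q hpq
    obtain ⟨p', q', hlt, hx, hy⟩ := hmem _ _ hpq
    rwa [hτ₀inj hx, hτ₀inj hy]
  have hsub : ∀ p, ∃ q, τ₀ q = τ p := by
    intro p
    rcases eq_or_ne p 0 with rfl | hp
    · have h01 : (0 : Fin (n+3)) < 1 := by
        rw [Fin.lt_def]; simp [Fin.val_one]
      obtain ⟨p', q', _, hx, _⟩ := hmem _ _ (hτedge 0 1 h01)
      exact ⟨p', hx.symm⟩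
    · have h0p : (0 : Fin (n+3)) < p := Fin.pos_of_ne_zero hp
      obtain ⟨p', q', _, _, hy⟩ := hmem _ _ (hτedge 0 p h0p)
      exact ⟨q', hy.symm⟩
  choose g hg using hsub
  have hgmono : StrictMono g := by
    intro p q hpq
    exact horder _ _ (by rw [hg, hg]; exact hτedge p q hpq)
  have hgid := strictMono_fin_eq_id g hgmono
  funext p
  rw [← hg p, hgid, id]

/-- **Lemma 1.** An almost-`d`-simplex `({σ, σ'}, e)` (with `d = n+2 ≥ 2`) in a simple
directed graph completes, after adding the missing edge `e` to `Edg(σ) ∪ Edg(σ')`,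
to exactly one `d`-simplex. -/
theorem almost_simplex_unique_completion {V : Type*} [Fintype V]
    (E : V → V → Prop) (hE : Irreflexive E)
    (n : ℕ) (σ σ' : Fin (n + 2) → V) (e : V × V)
    (h : IsAlmostSimplex E σ σ' e) :
    ∃! τ : Fin (n + 3) → V,
      IsSimplex (fun a b => (a, b) ∈ EdgSet σ ∪ EdgSet σ' ∪ {e}) τ := by
  obtain ⟨⟨hσinj, -⟩, ⟨hσ'inj, -⟩, i, i', hc, hne, hcase⟩ := h
  rcases hcase with ⟨hii, rfl⟩ | ⟨hii, rfl⟩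
  · exact key_lemma hσinj hσ'inj i i' (Fin.le_def.mp hii) hc hne
  · have hrw : EdgSet σ ∪ EdgSet σ' = EdgSet σ' ∪ EdgSet σ := Set.union_comm _ _
    rw [hrw]
    exact key_lemma hσ'inj hσinj i' i (Fin.le_def.mp hii) hc.symm hne.symm
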